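/- (Profitable deviation outside A_v.) Let G = (A, Φ) be an n-player game on a finite arena A with objective profile Φ = (φ₁, …, φ_n), where every φ_i is a Muller objective, and let v = (v₁, …, v_n) ∈ {0,1}^n. Let I = [1,n], W = {i | v_i = 1}, L = {i | v_i = 0}, φ_W = ⋂_{i∈W} φ_i, φ_L = ⋃_{i∈L} φ_i, and A_v = ⋂_{w∈W} ⟨⟨I\{w}⟩⟩(φ_W ∪ φ_L ∪ ¬φ_w) ∩ ⋂_{l∈L} ⟨⟨I\{l}⟩⟩((φ_W ∪ φ_L) ∩ ¬φ_l). If s ∈ S \ A_v, then there exists a player i ∈ I and a strategy σ'_i of player i such that for every strategy profile Σ^{-i} of the players I \ {i}, the payoff profile u of the unique play in Out_s((σ'_i, Σ^{-i})) satisfies v ≺_i u. -/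

import Mathlib

/-- The set of states occurring infinitely often in the infinite sequence `ρ`. -/
def infOcc {S : Type*} (ρ : ℕ → S) : Set S := {t | ∀ N, ∃ k ≥ N, ρ k = t}

/-- Büchi objective: `inf(ρ) ∩ B ≠ ∅`. -/
def Buchi {S : Type*} (B : Set S) : Set (ℕ → S) := {ρ | (infOcc ρ ∩ B).Nonempty}

/-- co-Büchi objective: `inf(ρ) ∩ B = ∅`. -/
def CoBuchi {S : Type*} (B : Set S) : Set (ℕ → S) := {ρ | infOcc ρ ∩ B = ∅}

/-- Parity objective: the minimum color seen infinitely often is even. -/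
def ParityObj {S : Type*} (p : S → ℕ) : Set (ℕ → S) :=
  {ρ | Even (sInf (p '' infOcc ρ))}

/-- Streett objective given a set of pairs. -/
def Streett {S : Type*} (T : Set (Set S × Set S)) : Set (ℕ → S) :=
  ⋂ FG ∈ T, (CoBuchi FG.1 ∪ Buchi FG.2)

/-- Rabin objective given a set of pairs. -/
def Rabin {S : Type*} (R : Set (Set S × Set S)) : Set (ℕ → S) :=
  ⋃ FG ∈ R, (Buchi FG.1 ∩ CoBuchi FG.2)

/-- A Muller objective: membership depends only on the set of states visited infinitely often. -/
def IsMuller {S : Type*} (φ : Set (ℕ → S)) : Prop :=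
  ∃ F : Set (Set S), φ = {ρ | infOcc ρ ∈ F}


/-- An `n`-player game arena: the decomposition `(S_i)` of the state set is given by the
`owner` function, `E` is the transition relation, and every state has an `E`-successor. -/
structure Arena (n : ℕ) (S : Type*) where
  owner : S → Fin n
  E : S → S → Prop
  succ_exists : ∀ s, ∃ t, E s t

namespace Arena

variable {n : ℕ} {S : Type*}

/-- A play: an infinite `E`-path. -/
def IsPlay (A : Arena n S) (ρ : ℕ → S) : Prop := ∀ k, A.E (ρ k) (ρ (k + 1))

/-- A (total representation of a) strategy `σ : S* S_i → S`: given the history `h` and the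
current state `s` (so the full finite sequence is `h · s`), it picks an `E`-successor of `s`. -/
def IsStrategy (A : Arena n S) (σ : List S → S → S) : Prop :=
  ∀ h s, A.E s (σ h s)

/-- The history `ρ 0 … ρ (k-1)`. -/
def hist (ρ : ℕ → S) (k : ℕ) : List S := List.ofFn (fun j : Fin k => ρ j)

/-- The play `ρ` is consistent with strategy `σ` of player `i`: whenever the current state
belongs to player `i`, the next state is the one chosen by `σ`. -/
def Consistent (A : Arena n S) (i : Fin n) (σ : List S → S → S) (ρ : ℕ → S) : Prop :=
  ∀ k, A.owner (ρ k) = i → ρ (k + 1) = σ (hist ρ k) (ρ k)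

/-- `Out_s(σ_i)`: plays starting at `s` consistent with player `i`'s strategy `σ`. -/
def Out (A : Arena n S) (i : Fin n) (σ : List S → S → S) (s : S) : Set (ℕ → S) :=
  {ρ | ρ 0 = s ∧ A.IsPlay ρ ∧ A.Consistent i σ ρ}

/-- `Out_s(Σ_P)`: plays starting at `s` consistent with the strategies of all players in `P`. -/
def OutP (A : Arena n S) (P : Set (Fin n)) (σ : Fin n → List S → S → S) (s : S) :
    Set (ℕ → S) :=
  {ρ | ρ 0 = s ∧ A.IsPlay ρ ∧ ∀ i ∈ P, A.Consistent i (σ i) ρ}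

/-- The winning region `⟨⟨P⟩⟩(φ)`: states from which the players in `P` have a strategy
profile forcing `φ`. -/
def Win (A : Arena n S) (P : Set (Fin n)) (φ : Set (ℕ → S)) : Set S :=
  {s | ∃ σ : Fin n → List S → S → S,
    (∀ i ∈ P, A.IsStrategy (σ i)) ∧ A.OutP P σ s ⊆ φ}

/-- One step of unfolding a full strategy profile: extend the history and move to
the state chosen by the owner of the current state. -/
def step (A : Arena n S) (σ : Fin n → List S → S → S) : List S × S → List S × S :=
  fun hc => (hc.1 ++ [hc.2], σ (A.owner hc.2) hc.1 hc.2)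

/-- `Out_s(Σ)` for a full strategy profile `Σ` is a unique play; `outcome` is that play. -/
def outcome (A : Arena n S) (σ : Fin n → List S → S → S) (s : S) (k : ℕ) : S :=
  ((A.step σ)^[k] ([], s)).2

end Arena

/-- The payoff profile of a play `ρ` with respect to the objective profile `Φ`. -/
noncomputable def payoff {n : ℕ} {S : Type*} (Φ : Fin n → Set (ℕ → S)) (ρ : ℕ → S) :
    Fin n → Bool :=
  fun i => @decide (ρ ∈ Φ i) (Classical.propDecidable _)

/-- Player `i`'s preference order on payoff profiles. -/
def Pref {n : ℕ} (i : Fin n) (u u' : Fin n → Bool) : Prop :=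
  u i < u' i ∨ (u i = u' i ∧ (∀ j, u' j ≤ u j) ∧ ∃ j, u' j < u j)

namespace Arena

variable {n : ℕ} {S : Type*}

/-- `Σ` is a secure equilibrium at `s`: no player `i` has a deviation yielding a payoff
profile preferred by `i`. -/
def IsSE (A : Arena n S) (Φ : Fin n → Set (ℕ → S)) (σ : Fin n → List S → S → S)
    (s : S) : Prop :=
  ∀ i : Fin n, ¬ ∃ σ' : List S → S → S, A.IsStrategy σ' ∧
    Pref i (payoff Φ (A.outcome σ s)) (payoff Φ (A.outcome (Function.update σ i σ') s))

/-- `SE_v`: states at which some secure equilibrium yields the payoff profile `v`. -/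
def SEset (A : Arena n S) (Φ : Fin n → Set (ℕ → S)) (v : Fin n → Bool) : Set S :=
  {s | ∃ σ : Fin n → List S → S → S, (∀ i, A.IsStrategy (σ i)) ∧
    A.IsSE Φ σ s ∧ payoff Φ (A.outcome σ s) = v}

end Arena

/-- `φ_W = ⋂_{i ∈ W} φ_i` where `W = {i | v_i = 1}`. -/
def phiW {n : ℕ} {S : Type*} (Φ : Fin n → Set (ℕ → S)) (v : Fin n → Bool) : Set (ℕ → S) :=
  ⋂ i ∈ {i : Fin n | v i = true}, Φ i

/-- `φ_L = ⋃_{i ∈ L} φ_i` where `L = {i | v_i = 0}`. -/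
def phiL {n : ℕ} {S : Type*} (Φ : Fin n → Set (ℕ → S)) (v : Fin n → Bool) : Set (ℕ → S) :=
  ⋃ i ∈ {i : Fin n | v i = false}, Φ i

/-- The set `A_v` of states from which, for each player `i`, the other players can retaliate. -/
def Arena.Av {n : ℕ} {S : Type*} (A : Arena n S) (Φ : Fin n → Set (ℕ → S))
    (v : Fin n → Bool) : Set S :=
  (⋂ w ∈ {i : Fin n | v i = true},
      A.Win ({w}ᶜ) (phiW Φ v ∪ phiL Φ v ∪ (Φ w)ᶜ)) ∩
  (⋂ l ∈ {i : Fin n | v i = false},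
      A.Win ({l}ᶜ) ((phiW Φ v ∪ phiL Φ v) ∩ (Φ l)ᶜ))

section MullerDet

open Classical

variable {S : Type*}

/-! ### Basic lemmas about `infOcc` and `Arena.hist` -/

lemma infOcc_subset_of_mem {ρ : ℕ → S} {t : S} (h : t ∈ infOcc ρ) : ∃ k, ρ k = t := by
  obtain ⟨k, -, hk⟩ := h 0
  exact ⟨k, hk⟩

lemma infOcc_shift (ρ : ℕ → S) (t0 : ℕ) : infOcc (fun m => ρ (t0 + m)) = infOcc ρ := by
  ext x
  constructor
  · intro h N
    obtain ⟨k, hk, he⟩ := h N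
    exact ⟨t0 + k, le_trans hk (Nat.le_add_left _ _), he⟩
  · intro h N
    obtain ⟨k, hk, he⟩ := h (t0 + N)
    refine ⟨k - t0, ?_, ?_⟩
    · omega
    · have : t0 + (k - t0) = k := by omega
      show ρ (t0 + (k - t0)) = x
      rw [this]; exact he

lemma infOcc_nonempty [Finite S] (ρ : ℕ → S) : (infOcc ρ).Nonempty := by
  obtain ⟨s, hs⟩ := Finite.exists_infinite_fiber ρ
  refine ⟨s, fun N => ?_⟩
  have : {k | ρ k = s}.Infinite := by
    have := hs
    rw [Set.infinite_coe_iff] at this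
    convert this using 1
    rfl
  obtain ⟨k, hk, hlt⟩ := this.exists_gt N
  exact ⟨k, le_of_lt hlt, hk⟩

lemma infOcc_inter_of_frequently [Finite S] {ρ : ℕ → S} {T : Set S}
    (h : ∀ N, ∃ k ≥ N, ρ k ∈ T) : ∃ t ∈ T, t ∈ infOcc ρ := by
  -- consider the sequence of visits; pigeonhole
  by_contra hc
  push_neg at hc
  -- every t in T occurs finitely often: get a common bound
  have hfin : ∀ t : S, t ∈ T → ∃ N, ∀ k ≥ N, ρ k ≠ t := by
    intro t ht
    have := hc t ht
    simp only [infOcc, Set.mem_setOf_eq, not_forall] at this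
    obtain ⟨N, hN⟩ := this
    push_neg at hN
    exact ⟨N, fun k hk => hN k hk⟩
  classical
  choose N hN using hfin
  have hTfin : T.Finite := Set.toFinite T
  let B := hTfin.toFinset.sup (fun t => if h : t ∈ T then N t h else 0)
  obtain ⟨k, hk, hmem⟩ := h B
  have hb : (if h : ρ k ∈ T then N (ρ k) h else 0) ≤ B := by
    refine Finset.le_sup (f := fun t => if h : t ∈ T then N t h else 0) ?_
    simpa using hmem
  rw [dif_pos hmem] at hb
  exact hN (ρ k) hmem k (le_trans hb hk) rfl

lemma hist_succ (ρ : ℕ → S) (k : ℕ) :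
    Arena.hist ρ (k + 1) = Arena.hist ρ k ++ [ρ k] := by
  simp only [Arena.hist, List.ofFn_succ']
  simp [List.concat_eq_append]

/-! ### Two-player game notions -/

variable (E : S → S → Prop)

/-- `U` is a subarena: every state has a successor inside. -/
def Subarena (U : Set S) : Prop := ∀ s ∈ U, ∃ t ∈ U, E s t

/-- A strategy valid everywhere and preserving `U`. -/
def ValidOn (U : Set S) (f : List S → S → S) : Prop :=
  ∀ h s, E s (f h s) ∧ (s ∈ U → f h s ∈ U)

/-- A play staying in `U`. -/
def PlayIn (U : Set S) (ρ : ℕ → S) : Prop :=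
  (∀ k, ρ k ∈ U) ∧ ∀ k, E (ρ k) (ρ (k + 1))

/-- Consistency with a strategy on the region `D`. -/
def ConsOn (D : Set S) (f : List S → S → S) (ρ : ℕ → S) : Prop :=
  ∀ k, ρ k ∈ D → ρ (k + 1) = f (Arena.hist ρ k) (ρ k)

/-- The player moving on `D` can force `infOcc ∈ G` from `s` in the arena `U`. -/
def WinOn (U D : Set S) (G : Set (Set S)) (s : S) : Prop :=
  ∃ f, ValidOn E U f ∧
    ∀ ρ, ρ 0 = s → PlayIn E U ρ → ConsOn D f ρ → infOcc ρ ∈ G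

/-- Pick a successor in `W` if possible, else any successor, else `s`. -/
noncomputable def pickSucc (W : Set S) (s : S) : S :=
  if h : ∃ t, t ∈ W ∧ E s t then h.choose
  else if h2 : ∃ t, E s t then h2.choose else s

lemma pickSucc_E (hE : ∀ s, ∃ t, E s t) (W : Set S) (s : S) : E s (pickSucc E W s) := by
  unfold pickSucc
  split
  · next h => exact h.choose_spec.2
  · rw [dif_pos (hE s)]
    exact (hE s).choose_spec

lemma pickSucc_mem {W : Set S} {s : S} (h : ∃ t, t ∈ W ∧ E s t) :
    pickSucc E W s ∈ W ∧ E s (pickSucc E W s) := by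
  unfold pickSucc
  rw [dif_pos h]
  exact ⟨h.choose_spec.1, h.choose_spec.2⟩

/-- Memory-machine strategies: fold the memory update over the history. -/
def mstrat {M : Type*} (upd : M → S → M) (init : M) (mov : M → S → S) :
    List S → S → S := fun h s => mov (h.foldl upd init) s

lemma mstrat_mem_succ {M : Type*} (upd : M → S → M) (init : M) (ρ : ℕ → S) (k : ℕ) :
    (Arena.hist ρ (k + 1)).foldl upd init = upd ((Arena.hist ρ k).foldl upd init) (ρ k) := by
  rw [hist_succ, List.foldl_append]
  rfl

/-! ### Attractors -/

/-- `n`-step attractor for the player moving on `D` to the target `T`, within `U`. -/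
def attrN (U D T : Set S) : ℕ → Set S
  | 0 => T ∩ U
  | n + 1 => attrN U D T n ∪
      {s | s ∈ U ∧ ((s ∈ D ∧ ∃ t, E s t ∧ t ∈ attrN U D T n) ∨
        (s ∉ D ∧ ∀ t, E s t → t ∈ U → t ∈ attrN U D T n))}

/-- The attractor. -/
def attrFull (U D T : Set S) : Set S := ⋃ n, attrN E U D T n

lemma attrN_mono_succ (U D T : Set S) (n : ℕ) : attrN E U D T n ⊆ attrN E U D T (n + 1) :=
  Set.subset_union_left

lemma attrN_mono (U D T : Set S) {m n : ℕ} (h : m ≤ n) : attrN E U D T m ⊆ attrN E U D T n := by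
  induction n with
  | zero => simp_all
  | succ n ih =>
    rcases Nat.lt_or_ge m (n+1) with h' | h'
    · exact (ih (by omega)).trans (attrN_mono_succ E U D T n)
    · have : m = n + 1 := by omega
      subst this; exact subset_rfl

lemma attrN_subset_U (U D T : Set S) (n : ℕ) : attrN E U D T n ⊆ U := by
  induction n with
  | zero => exact Set.inter_subset_right
  | succ n ih =>
    intro s hs
    rcases hs with h | h
    · exact ih h
    · exact h.1

lemma attrFull_subset_U (U D T : Set S) : attrFull E U D T ⊆ U := by
  intro s hs
  obtain ⟨n, hn⟩ := Set.mem_iUnion.1 hs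
  exact attrN_subset_U E U D T n hn

lemma target_subset_attrFull (U D T : Set S) : T ∩ U ⊆ attrFull E U D T :=
  fun s hs => Set.mem_iUnion.2 ⟨0, hs⟩

lemma mem_attrFull_iff {U D T : Set S} {s : S} :
    s ∈ attrFull E U D T ↔ ∃ n, s ∈ attrN E U D T n := Set.mem_iUnion

/-- If a `D`-state outside the attractor has a successor, it is outside the attractor. -/
lemma attr_compl_D {U D T : Set S} {s t : S} (hs : s ∉ attrFull E U D T)
    (hsU : s ∈ U) (hsD : s ∈ D) (hE : E s t) : t ∉ attrFull E U D T := by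
  intro ht
  obtain ⟨n, hn⟩ := mem_attrFull_iff E |>.1 ht
  exact hs (Set.mem_iUnion.2 ⟨n + 1, Or.inr ⟨hsU, Or.inl ⟨hsD, t, hE, hn⟩⟩⟩)

/-- A non-`D`-state outside the attractor has a successor in `U` outside the attractor. -/
lemma attr_compl_nD [Finite S] {U D T : Set S} {s : S} (hs : s ∉ attrFull E U D T)
    (hsU : s ∈ U) (hsD : s ∉ D) (hsucc : ∃ t ∈ U, E s t) :
    ∃ t, E s t ∧ t ∈ U ∧ t ∉ attrFull E U D T := by
  by_contra hc
  push_neg at hc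
  -- all successors in U are in the attractor; find a common level
  have hlev : ∀ t : S, E s t → t ∈ U → ∃ n, t ∈ attrN E U D T n := by
    intro t h1 h2
    exact mem_attrFull_iff E |>.1 (hc t h1 h2)
  classical
  set Ts : Set S := {t | E s t ∧ t ∈ U} with hTs
  have hfin : Ts.Finite := Set.toFinite _
  let lev : S → ℕ := fun t => if h : ∃ n, t ∈ attrN E U D T n then Nat.find h else 0
  let B := hfin.toFinset.sup lev
  have hall : ∀ t, E s t → t ∈ U → t ∈ attrN E U D T B := by
    intro t h1 h2
    have hmem : t ∈ hfin.toFinset := by simp [hTs, h1, h2]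
    have hl : lev t ≤ B := Finset.le_sup hmem
    have hex := hlev t h1 h2
    have : t ∈ attrN E U D T (lev t) := by
      simp only [lev, dif_pos hex]
      exact Nat.find_spec hex
    exact attrN_mono E U D T hl this
  exact hs (Set.mem_iUnion.2 ⟨B + 1, Or.inr ⟨hsU, Or.inr ⟨hsD, hall⟩⟩⟩)

/-- Attractor rank. -/
noncomputable def attrRk (U D T : Set S) (s : S) : ℕ :=
  if h : ∃ n, s ∈ attrN E U D T n then Nat.find h else 0

/-- The attractor strategy (positional). -/
noncomputable def attrStrat (U D T : Set S) (s : S) : S :=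
  if h : ∃ t, E s t ∧ t ∈ attrN E U D T (attrRk E U D T s - 1) then h.choose
  else pickSucc E U s

lemma attrStrat_spec {U D T : Set S} {s : S} {n : ℕ} (h1 : s ∈ attrN E U D T (n + 1))
    (h2 : s ∉ attrN E U D T n) (hD : s ∈ D) :
    E s (attrStrat E U D T s) ∧ attrStrat E U D T s ∈ attrN E U D T n := by
  have hex : ∃ m, s ∈ attrN E U D T m := ⟨n + 1, h1⟩
  have hrk : attrRk E U D T s = n + 1 := by
    unfold attrRk
    rw [dif_pos hex]
    refine le_antisymm (Nat.find_le h1) ?_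
    by_contra hlt
    push_neg at hlt
    exact h2 (attrN_mono E U D T (by omega) (Nat.find_spec hex))
  have hnotT : s ∉ T ∩ U := by
    intro hT
    exact h2 (attrN_mono E U D T (Nat.zero_le n) hT)
  have hstep : ∃ t, E s t ∧ t ∈ attrN E U D T n := by
    rcases h1 with h | h
    · exact absurd h h2
    · rcases h.2 with ⟨-, hh⟩ | ⟨hnD, -⟩
      · exact hh
      · exact absurd hD hnD
  unfold attrStrat
  rw [hrk]
  simp only [Nat.add_sub_cancel]
  rw [dif_pos hstep]
  exact ⟨hstep.choose_spec.1, hstep.choose_spec.2⟩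

/-- Forcing lemma: from the attractor, if the `D`-player plays the attractor strategy
(before the first visit to the target), the target is reached. -/
lemma attr_force {U D T : Set S} (n : ℕ) :
    ∀ (t0 : ℕ) (ρ : ℕ → S), ρ t0 ∈ attrN E U D T n → PlayIn E U ρ →
    (∀ m, t0 ≤ m → (∀ i, t0 ≤ i → i ≤ m → ρ i ∉ T ∩ U) → ρ m ∈ attrFull E U D T →
      ρ m ∈ D → ρ (m + 1) = attrStrat E U D T (ρ m)) →
    ∃ m, t0 ≤ m ∧ ρ m ∈ T ∩ U ∧ ∀ i, t0 ≤ i → i < m → ρ i ∈ attrFull E U D T ∧ ρ i ∉ T ∩ U := by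
  induction n with
  | zero =>
    intro t0 ρ h _ _
    exact ⟨t0, le_rfl, h, fun i h1 h2 => absurd (lt_of_le_of_lt h1 h2) (lt_irrefl _)⟩
  | succ n ih =>
    intro t0 ρ hmem hplay hcons
    by_cases hT : ρ t0 ∈ T ∩ U
    · exact ⟨t0, le_rfl, hT, fun i h1 h2 => absurd (lt_of_le_of_lt h1 h2) (lt_irrefl _)⟩
    by_cases hn : ρ t0 ∈ attrN E U D T n
    · exact ih t0 ρ hn hplay hcons
    have hattr : ρ t0 ∈ attrFull E U D T := Set.mem_iUnion.2 ⟨n + 1, hmem⟩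
    have hnext : ρ (t0 + 1) ∈ attrN E U D T n := by
      by_cases hD : ρ t0 ∈ D
      · have := hcons t0 le_rfl (fun i h1 h2 => by
          have : i = t0 := le_antisymm h2 h1
          rw [this]; exact hT) hattr hD
        rw [this]
        exact (attrStrat_spec E hmem hn hD).2
      · rcases hmem with h | h
        · exact absurd h hn
        · rcases h.2 with ⟨hD', -⟩ | ⟨-, hall⟩
          · exact absurd hD' hD
          · exact hall _ (hplay.2 t0) (hplay.1 (t0 + 1))
    have hcons' : ∀ m, t0 + 1 ≤ m → (∀ i, t0 + 1 ≤ i → i ≤ m → ρ i ∉ T ∩ U) →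
        ρ m ∈ attrFull E U D T → ρ m ∈ D → ρ (m + 1) = attrStrat E U D T (ρ m) := by
      intro m h1 h2 h3 h4
      refine hcons m (by omega) (fun i hi1 hi2 => ?_) h3 h4
      rcases Nat.eq_or_lt_of_le hi1 with he | hl
      · rw [← he]; exact hT
      · exact h2 i (by omega) hi2
    obtain ⟨m, hm1, hm2, hm3⟩ := ih (t0 + 1) ρ hnext hplay hcons'
    refine ⟨m, by omega, hm2, fun i hi1 hi2 => ?_⟩
    rcases Nat.eq_or_lt_of_le hi1 with he | hl
    · rw [← he]; exact ⟨hattr, hT⟩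
    · exact hm3 i (by omega) hi2

lemma hist_zero (ρ : ℕ → S) : Arena.hist ρ 0 = [] := rfl

lemma attrStrat_valid (hE : ∀ s, ∃ t, E s t) {U : Set S} (hU : Subarena E U) (D T : Set S)
    (s : S) : E s (attrStrat E U D T s) ∧ (s ∈ U → attrStrat E U D T s ∈ U) := by
  unfold attrStrat
  split
  · next h =>
    exact ⟨h.choose_spec.1, fun _ => attrN_subset_U E U D T _ h.choose_spec.2⟩
  · exact ⟨pickSucc_E E hE U s, fun hs => (pickSucc_mem E (by
      obtain ⟨t, ht, he⟩ := hU s hs; exact ⟨t, ht, he⟩)).1⟩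

/-- A chosen winning strategy (with a harmless default). -/
noncomputable def winStrat (U D : Set S) (G : Set (Set S)) (e : S) : List S → S → S :=
  if h : WinOn E U D G e then h.choose else fun _ s => pickSucc E U s

lemma winStrat_valid (hE : ∀ s, ∃ t, E s t) {U : Set S} (hU : Subarena E U) (D : Set S)
    (G : Set (Set S)) (e : S) : ValidOn E U (winStrat E U D G e) := by
  unfold winStrat
  split
  · next h => exact h.choose_spec.1
  · intro h s
    exact ⟨pickSucc_E E hE U s, fun hs => (pickSucc_mem E (by
      obtain ⟨t, ht, he⟩ := hU s hs; exact ⟨t, ht, he⟩)).1⟩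

lemma winStrat_win {U D : Set S} {G : Set (Set S)} {e : S} (h : WinOn E U D G e) :
    ∀ ρ, ρ 0 = e → PlayIn E U ρ → ConsOn D (winStrat E U D G e) ρ → infOcc ρ ∈ G := by
  unfold winStrat
  rw [dif_pos h]
  exact h.choose_spec.2

/-- Lemma A: the winning region is closed under taking attractors. -/
lemma win_attr_ext (hE : ∀ s, ∃ t, E s t) {U D T : Set S} {G : Set (Set S)}
    (hU : Subarena E U) (hT : ∀ e ∈ T, WinOn E U D G e) :
    ∀ s ∈ attrFull E U D T, WinOn E U D G s := by
  intro s hs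
  classical
  set upd : Option (S × List S) → S → Option (S × List S) := fun m x =>
    match m with
    | none => if x ∈ T then some (x, [x]) else none
    | some (e, h) => some (e, h ++ [x]) with hupd
  set mov : Option (S × List S) → S → S := fun m x =>
    match m with
    | none => if x ∈ T then winStrat E U D G x [] x else attrStrat E U D T x
    | some (e, h) => winStrat E U D G e h x with hmov
  refine ⟨mstrat upd none mov, ?_, ?_⟩
  · intro h x
    simp only [mstrat]
    rcases hmem : h.foldl upd none with - | ⟨e, hh⟩ <;> simp only [hmov]
    · by_cases hx : x ∈ T
      · simp only [if_pos hx]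
        exact winStrat_valid E hE hU D G x [] x
      · simp only [if_neg hx]
        exact attrStrat_valid E hE hU D T x
    · exact ⟨(winStrat_valid E hE hU D G e hh x).1, fun hxU => (winStrat_valid E hE hU D G e hh x).2 hxU⟩
  · intro ρ h0 hplay hcons
    set mem : ℕ → Option (S × List S) := fun k => (Arena.hist ρ k).foldl upd none with hmemdef
    have hmem0 : mem 0 = none := rfl
    have hmemS : ∀ k, mem (k + 1) = upd (mem k) (ρ k) := fun k => mstrat_mem_succ upd none ρ k
    have hconsm : ∀ k, ρ k ∈ D → ρ (k + 1) = mov (mem k) (ρ k) := fun k hk => hcons k hk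
    by_cases hvisit : ∃ k, ρ k ∈ T
    · -- first visit to T
      set t0 := Nat.find hvisit with ht0
      have htT : ρ t0 ∈ T := Nat.find_spec hvisit
      have hbefore : ∀ k < t0, ρ k ∉ T := fun k hk => Nat.find_min hvisit hk
      have hmemnone : ∀ k ≤ t0, mem k = none := by
        intro k hk
        induction k with
        | zero => exact hmem0
        | succ k ih =>
          rw [hmemS, ih (by omega)]
          simp only [hupd]
          rw [if_neg (hbefore k (by omega))]
      set τ : ℕ → S := fun m => ρ (t0 + m) with hτ
      have hτ0 : τ 0 = ρ t0 := by simp [hτ]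
      have hmemtail : ∀ m, 1 ≤ m → mem (t0 + m) = some (ρ t0, Arena.hist τ m) := by
        intro m hm
        induction m with
        | zero => omega
        | succ m ih =>
          rcases Nat.eq_or_lt_of_le hm with he | hl
          · rw [← he]
            have h1 : Arena.hist τ 1 = [τ 0] := by rw [hist_succ, hist_zero]; simp
            rw [hmemS t0, hmemnone t0 le_rfl, h1, hτ0]
            simp only [hupd]
            rw [if_pos htT]
          · have hmm : 1 ≤ m := by omega
            have heq : t0 + (m + 1) = (t0 + m) + 1 := by omega
            rw [heq, hmemS, ih hmm]
            simp only [hupd]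
            have : Arena.hist τ (m + 1) = Arena.hist τ m ++ [τ m] := hist_succ τ m
            rw [this]
            try rfl
      have hτplay : PlayIn E U τ := by
        constructor
        · intro k; exact hplay.1 _
        · intro k
          have : t0 + (k + 1) = (t0 + k) + 1 := by omega
          simp only [hτ, this]
          exact hplay.2 _
      have hτcons : ConsOn D (winStrat E U D G (ρ t0)) τ := by
        intro m hm
        have heq : τ (m + 1) = ρ ((t0 + m) + 1) := by simp only [hτ, ← Nat.add_assoc]
        rw [heq, hconsm (t0 + m) hm]
        rcases Nat.eq_zero_or_pos m with h | h
        · subst h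
          simp only [Nat.add_zero]
          rw [hmemnone t0 le_rfl]
          simp only [hmov]
          rw [if_pos htT, hist_zero]
          try simp [hτ]
        · rw [hmemtail m h]
          try simp only [hmov, hτ]
      have := winStrat_win E (hT _ htT) τ hτ0 hτplay hτcons
      rwa [hτ, infOcc_shift] at this
    · -- no visit: the attractor strategy forces one, contradiction
      push_neg at hvisit
      exfalso
      have hmemnone : ∀ k, mem k = none := by
        intro k
        induction k with
        | zero => exact hmem0
        | succ k ih =>
          rw [hmemS, ih]
          simp only [hupd]
          rw [if_neg (hvisit k)]
      obtain ⟨n, hn⟩ := mem_attrFull_iff E |>.1 hs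
      have h0' : ρ 0 ∈ attrN E U D T n := by rw [h0]; exact hn
      obtain ⟨m, -, hm, -⟩ := attr_force E n 0 ρ h0' hplay (by
        intro m _ _ _ hD
        rw [hconsm m hD, hmemnone m]
        simp only [hmov]
        rw [if_neg (hvisit m)])
      exact hvisit m hm.1

/-- Lemma B: winning a subgame `R` whose only escapes (by the opponent of the
`Q`-player... here escapes are by the non-`Q` player) land in a winning set `Esc`
yields winning in the full arena. -/
lemma win_escape (hE : ∀ s, ∃ t, E s t) {U R Esc Q : Set S} {G : Set (Set S)}
    (hU : Subarena E U) (hRU : R ⊆ U)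
    (hEscWin : ∀ y ∈ Esc, WinOn E U Q G y)
    (hEscape : ∀ x ∈ R, x ∉ Q → ∀ t, E x t → t ∈ U → t ∈ R ∪ Esc)
    {s : S} (hsR : s ∈ R) (hwin : WinOn E R Q G s) :
    WinOn E U Q G s := by
  classical
  obtain ⟨σ, hσvalid, hσwin⟩ := hwin
  set upd : (List S ⊕ (S × List S)) → S → (List S ⊕ (S × List S)) := fun m x =>
    match m with
    | Sum.inl h => if x ∈ R then Sum.inl (h ++ [x]) else Sum.inr (x, [x])
    | Sum.inr (e, h) => Sum.inr (e, h ++ [x]) with hupd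
  set mov : (List S ⊕ (S × List S)) → S → S := fun m x =>
    match m with
    | Sum.inl h => if x ∈ R then σ h x else winStrat E U Q G x [] x
    | Sum.inr (e, h) => winStrat E U Q G e h x with hmov
  refine ⟨mstrat upd (Sum.inl []) mov, ?_, ?_⟩
  · intro h x
    simp only [mstrat]
    rcases hmem : h.foldl upd (Sum.inl []) with hh | ⟨e, hh⟩ <;> simp only [hmov]
    · by_cases hx : x ∈ R
      · simp only [if_pos hx]
        exact ⟨(hσvalid hh x).1, fun _ => hRU ((hσvalid hh x).2 hx)⟩
      · simp only [if_neg hx]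
        exact winStrat_valid E hE hU Q G x [] x
    · exact winStrat_valid E hE hU Q G e hh x
  · intro ρ h0 hplay hcons
    set mem : ℕ → (List S ⊕ (S × List S)) := fun k => (Arena.hist ρ k).foldl upd (Sum.inl []) with hmemdef
    have hmem0 : mem 0 = Sum.inl [] := rfl
    have hmemS : ∀ k, mem (k + 1) = upd (mem k) (ρ k) := fun k => mstrat_mem_succ upd _ ρ k
    have hconsm : ∀ k, ρ k ∈ Q → ρ (k + 1) = mov (mem k) (ρ k) := fun k hk => hcons k hk
    have hmeminl : ∀ k, (∀ i < k, ρ i ∈ R) → mem k = Sum.inl (Arena.hist ρ k) := by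
      intro k
      induction k with
      | zero => intro _; rw [hmem0, hist_zero]
      | succ k ih =>
        intro hall
        rw [hmemS, ih (fun i hi => hall i (by omega))]
        simp only [hupd]
        rw [if_pos (hall k (by omega)), hist_succ]
    by_cases hstay : ∀ k, ρ k ∈ R
    · -- the play stays in the subgame
      have hconsσ : ConsOn Q σ ρ := by
        intro k hk
        rw [hconsm k hk, hmeminl k (fun i _ => hstay i)]
        simp only [hmov]
        rw [if_pos (hstay k)]
      exact hσwin ρ h0 ⟨hstay, hplay.2⟩ hconsσ
    · push_neg at hstay
      have hvisit : ∃ k, ρ k ∉ R := hstay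
      set t0 := Nat.find hvisit with ht0
      have htR : ρ t0 ∉ R := Nat.find_spec hvisit
      have hbefore : ∀ k < t0, ρ k ∈ R := by
        intro k hk
        by_contra hc
        have h1 : t0 ≤ k := ht0 ▸ Nat.find_le hc
        omega
      have ht0pos : 1 ≤ t0 := by
        rcases Nat.eq_zero_or_pos t0 with h | h
        · exfalso; apply htR; rw [h, h0]; exact hsR
        · exact h
      -- the escape state is in Esc
      have hesc : ρ t0 ∈ Esc := by
        have hprev : ρ (t0 - 1) ∈ R := hbefore _ (by omega)
        have hstep : t0 - 1 + 1 = t0 := by omega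
        by_cases hQ : ρ (t0 - 1) ∈ Q
        · exfalso
          have := hconsm (t0 - 1) hQ
          rw [hmeminl (t0 - 1) (fun i hi => hbefore i (by omega))] at this
          simp only [hmov] at this
          rw [if_pos hprev] at this
          apply htR
          rw [← hstep, this]
          exact (hσvalid _ _).2 hprev
        · have := hEscape _ hprev hQ (ρ t0) (by rw [← hstep]; exact hplay.2 (t0 - 1))
            (hplay.1 t0)
          rcases this with h | h
          · exact absurd h htR
          · exact h
      set τ : ℕ → S := fun m => ρ (t0 + m) with hτ
      have hτ0 : τ 0 = ρ t0 := by simp [hτ]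
      have hmemtail : ∀ m, 1 ≤ m → mem (t0 + m) = Sum.inr (ρ t0, Arena.hist τ m) := by
        intro m hm
        induction m with
        | zero => omega
        | succ m ih =>
          rcases Nat.eq_or_lt_of_le hm with he | hl
          · rw [← he]
            have h1 : Arena.hist τ 1 = [τ 0] := by rw [hist_succ, hist_zero]; simp
            rw [hmemS t0, hmeminl t0 hbefore, h1, hτ0]
            simp only [hupd]
            rw [if_neg htR]
          · have hmm : 1 ≤ m := by omega
            have heq : t0 + (m + 1) = (t0 + m) + 1 := by omega
            rw [heq, hmemS, ih hmm]
            simp only [hupd]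
            have : Arena.hist τ (m + 1) = Arena.hist τ m ++ [τ m] := hist_succ τ m
            rw [this]
            try rfl
      have hτplay : PlayIn E U τ := by
        constructor
        · intro k; exact hplay.1 _
        · intro k
          have : t0 + (k + 1) = (t0 + k) + 1 := by omega
          simp only [hτ, this]
          exact hplay.2 _
      have hτcons : ConsOn Q (winStrat E U Q G (ρ t0)) τ := by
        intro m hm
        have heq : τ (m + 1) = ρ ((t0 + m) + 1) := by simp only [hτ, ← Nat.add_assoc]
        rw [heq, hconsm (t0 + m) hm]
        rcases Nat.eq_zero_or_pos m with h | h
        · subst h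
          simp only [Nat.add_zero]
          rw [hmeminl t0 hbefore]
          simp only [hmov]
          rw [if_neg htR, hist_zero]
          try simp [hτ]
        · rw [hmemtail m h]
          try simp only [hmov, hτ]
      have := winStrat_win E (hEscWin _ hesc) τ hτ0 hτplay hτcons
      rwa [hτ, infOcc_shift] at this

/-- The round-robin lemma: if in the region `V` (a trap for the non-`D` player) every
subgame away from the attractor of each "maximal bad set complement" is won by the
`D`-player, then the `D`-player wins everywhere on `V`. -/
lemma round_robin [Finite S] (hE : ∀ s, ∃ t, E s t) (U V D : Set S) (G : Set (Set S))
    (hU : Subarena E U) (hVU : V ⊆ U)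
    (hVtrap : ∀ x ∈ V, x ∉ D → ∀ t, E x t → t ∈ U → t ∈ V)
    (hVsub : Subarena E V)
    (ms : List (Set S))
    (hcover : ∀ T : Set S, T.Nonempty → T ⊆ V → T ∉ G → ∃ M ∈ ms, T ⊆ M)
    (hsub : ∀ p : ℕ, ∀ e ∈ V \ attrFull E V D (V \ ms.getD (p % ms.length) ∅),
        WinOn E (V \ attrFull E V D (V \ ms.getD (p % ms.length) ∅)) D G e) :
    ∀ s ∈ V, WinOn E U D G s := by
  classical
  intro s hsV
  set Tset : ℕ → Set S := fun p => V \ ms.getD (p % ms.length) ∅ with hTset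
  set Aset : ℕ → Set S := fun p => attrFull E V D (Tset p) with hAset
  set VV : ℕ → Set S := fun p => V \ Aset p with hVV
  have hTsetA : ∀ p, Tset p ⊆ Aset p := by
    intro p x hx
    exact target_subset_attrFull E V D (Tset p) ⟨hx, hx.1⟩
  have hAsetV : ∀ p, Aset p ⊆ V := fun p => attrFull_subset_U E V D (Tset p)
  have hVVsub : ∀ p, Subarena E (VV p) := by
    intro p x hx
    by_cases hD : x ∈ D
    · obtain ⟨t, htV, hte⟩ := hVsub x hx.1
      exact ⟨t, ⟨htV, attr_compl_D E hx.2 hx.1 hD hte⟩, hte⟩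
    · obtain ⟨t, hte, htV, hta⟩ := attr_compl_nD E hx.2 hx.1 hD
        (by obtain ⟨t, htV, hte⟩ := hVsub x hx.1; exact ⟨t, htV, hte⟩)
      exact ⟨t, ⟨htV, hta⟩, hte⟩
  set upd : (ℕ × Option (S × List S)) → S → (ℕ × Option (S × List S)) := fun m x =>
    if x ∈ Tset m.1 then (m.1 + 1, none)
    else if x ∈ Aset m.1 then (m.1, none)
    else (m.1, some (match m.2 with
      | none => (x, [x])
      | some (e, h) => (e, h ++ [x]))) with hupd
  set mov : (ℕ × Option (S × List S)) → S → S := fun m x =>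
    if x ∈ Tset m.1 then pickSucc E V x
    else if x ∈ Aset m.1 then attrStrat E V D (Tset m.1) x
    else if x ∈ V then (match m.2 with
      | none => winStrat E (VV m.1) D G x [] x
      | some (e, h) => winStrat E (VV m.1) D G e h x)
    else pickSucc E U x with hmov
  -- mov always yields a V-successor from V
  have hpickV : ∀ x ∈ V, pickSucc E V x ∈ V ∧ E x (pickSucc E V x) := by
    intro x hx
    exact pickSucc_mem E (by obtain ⟨t, htV, hte⟩ := hVsub x hx; exact ⟨t, htV, hte⟩)
  have hmovV : ∀ m x, x ∈ V → E x (mov m x) ∧ mov m x ∈ V := by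
    rintro ⟨p, o⟩ x hx
    by_cases h1 : x ∈ Tset p
    · have hm : mov (p, o) x = pickSucc E V x := by
        simp only [hmov]; rw [if_pos h1]
      rw [hm]
      exact ⟨(hpickV x hx).2, (hpickV x hx).1⟩
    · by_cases h2 : x ∈ Aset p
      · have hm : mov (p, o) x = attrStrat E V D (Tset p) x := by
          simp only [hmov]; rw [if_neg h1, if_pos h2]
        rw [hm]
        have := attrStrat_valid E hE hVsub D (Tset p) x
        exact ⟨this.1, this.2 hx⟩
      · have hxVV : x ∈ VV p := ⟨hx, h2⟩
        rcases o with - | ⟨e, hh⟩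
        · have hm : mov (p, none) x = winStrat E (VV p) D G x [] x := by
            simp only [hmov]; rw [if_neg h1, if_neg h2, if_pos hx]
          rw [hm]
          have := winStrat_valid E hE (hVVsub p) D G x [] x
          exact ⟨this.1, (this.2 hxVV).1⟩
        · have hm : mov (p, some (e, hh)) x = winStrat E (VV p) D G e hh x := by
            simp only [hmov]; rw [if_neg h1, if_neg h2, if_pos hx]
          rw [hm]
          have := winStrat_valid E hE (hVVsub p) D G e hh x
          exact ⟨this.1, (this.2 hxVV).1⟩
  refine ⟨mstrat upd (0, none) mov, ?_, ?_⟩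
  · -- validity
    intro h x
    simp only [mstrat]
    set m := h.foldl upd (0, none)
    by_cases hx : x ∈ V
    · exact ⟨(hmovV m x hx).1, fun _ => hVU (hmovV m x hx).2⟩
    · simp only [hmov]
      rw [if_neg (fun hc : x ∈ Tset m.1 => hx hc.1),
        if_neg (fun hc : x ∈ Aset m.1 => hx (hAsetV m.1 hc)), if_neg hx]
      refine ⟨pickSucc_E E hE U x, fun hxU => ?_⟩
      exact (pickSucc_mem (W := U) E (by
        obtain ⟨t, htU, hte⟩ := hU x hxU; exact ⟨t, htU, hte⟩)).1
  · -- winning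
    intro ρ h0 hplay hcons
    set mem : ℕ → ℕ × Option (S × List S) := fun k => (Arena.hist ρ k).foldl upd (0, none) with hmemdef
    have hmem0 : mem 0 = (0, none) := rfl
    have hmemS : ∀ k, mem (k + 1) = upd (mem k) (ρ k) := fun k => mstrat_mem_succ upd _ ρ k
    have hconsm : ∀ k, ρ k ∈ D → ρ (k + 1) = mov (mem k) (ρ k) := fun k hk => hcons k hk
    -- the play stays in V
    have hinV : ∀ k, ρ k ∈ V := by
      intro k
      induction k with
      | zero => rw [h0]; exact hsV
      | succ k ih =>
        by_cases hD : ρ k ∈ D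
        · rw [hconsm k hD]; exact (hmovV (mem k) (ρ k) ih).2
        · exact hVtrap (ρ k) ih hD (ρ (k+1)) (hplay.2 k) (hplay.1 (k+1))
    set ph : ℕ → ℕ := fun k => (mem k).1 with hph
    set evt : ℕ → Prop := fun k => ρ k ∈ Tset (ph k) with hevt
    have hstep : ∀ k, (evt k → mem (k + 1) = (ph k + 1, none)) ∧
        (¬ evt k → ph (k + 1) = ph k) := by
      intro k
      constructor
      · intro he
        rw [hmemS]
        simp only [hupd]
        rw [if_pos he]
      · intro hne
        simp only [hph, hmemS k]
        simp only [hupd]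
        rw [if_neg hne]
        split <;> rfl
    have hphle : ∀ k, ph k ≤ k := by
      intro k
      induction k with
      | zero => simp [hph, hmem0]
      | succ k ih =>
        by_cases he : evt k
        · have h2 := (hstep k).1 he
          have h3 : ph (k+1) = ph k + 1 := by
            show (mem (k+1)).1 = ph k + 1
            rw [h2]
          omega
        · have := (hstep k).2 he
          omega
    by_cases hinf : ∀ N, ∃ k, N ≤ k ∧ evt k
    · -- infinitely many switches
      have hnext : ∀ k, ∃ k', k ≤ k' ∧ evt k' ∧ ph k' = ph k := by
        intro k
        have hex : ∃ j, evt (k + j) := by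
          obtain ⟨k', hk', he⟩ := hinf k
          refine ⟨k' - k, ?_⟩
          have heq : k + (k' - k) = k' := by omega
          rw [heq]; exact he
        set j0 := Nat.find hex with hj0
        have hj0e : evt (k + j0) := Nat.find_spec hex
        have hconst : ∀ i, i ≤ j0 → ph (k + i) = ph k := by
          intro i hi
          induction i with
          | zero => rfl
          | succ i ih =>
            have hlt : i < j0 := by omega
            have hne : ¬ evt (k + i) := by
              intro hc
              have : j0 ≤ i := hj0 ▸ Nat.find_le hc
              omega
            have h4 := (hstep (k + i)).2 hne
            have heq : k + (i + 1) = (k + i) + 1 := by omega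
            rw [heq, h4, ih (by omega)]
        exact ⟨k + j0, by omega, hj0e, hconst j0 le_rfl⟩
      have hall : ∀ m, ∃ k, evt k ∧ ph k = m := by
        intro m
        induction m with
        | zero =>
          obtain ⟨k', h1, h2, h3⟩ := hnext 0
          refine ⟨k', h2, ?_⟩
          rw [h3]
          show (mem 0).1 = 0
          rw [hmem0]
        | succ m ih =>
          obtain ⟨k, he, hp⟩ := ih
          have h2 := (hstep k).1 he
          have hp1 : ph (k + 1) = m + 1 := by
            show (mem (k + 1)).1 = m + 1
            rw [h2, hp]
          obtain ⟨k', h1', h2', h3'⟩ := hnext (k + 1)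
          exact ⟨k', h2', by rw [h3', hp1]⟩
      have hsubV : infOcc ρ ⊆ V := by
        intro t ht
        obtain ⟨k, hk⟩ := infOcc_subset_of_mem ht
        rw [← hk]; exact hinV k
      by_contra hbad
      obtain ⟨M, hMms, hMsub⟩ := hcover (infOcc ρ) (infOcc_nonempty ρ) hsubV hbad
      obtain ⟨j, hj, hjM⟩ := List.mem_iff_getElem.1 hMms
      have hlen : 1 ≤ ms.length := by omega
      have hfreq : ∀ N, ∃ k, N ≤ k ∧ ρ k ∈ V \ M := by
        intro N
        obtain ⟨k, he, hp⟩ := hall (j + ms.length * N)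
        have hkN : N ≤ k := by
          have := hphle k
          have hNle : N ≤ ms.length * N := Nat.le_mul_of_pos_left N (by omega)
          omega
        refine ⟨k, hkN, ?_⟩
        have hmod : (j + ms.length * N) % ms.length = j := by
          rw [Nat.add_mul_mod_self_left, Nat.mod_eq_of_lt hj]
        have hTeq : Tset (ph k) = V \ M := by
          rw [hp]
          simp only [hTset]
          rw [hmod, List.getD_eq_getElem ms ∅ hj, hjM]
        rw [← hTeq]
        exact he
      obtain ⟨t, htVM, htInf⟩ := infOcc_inter_of_frequently hfreq
      exact htVM.2 (hMsub htInf)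
    · -- finitely many switches: eventually the play follows one subgame strategy
      push_neg at hinf
      obtain ⟨K, hK⟩ := hinf
      set P := ph K with hP
      have hphconst : ∀ k, K ≤ k → ph k = P := by
        intro k hk
        induction k with
        | zero =>
          have hK0 : K = 0 := by omega
          rw [hP, hK0]
        | succ k ih =>
          rcases Nat.lt_or_ge K (k + 1) with h | h
          · have hKk : K ≤ k := by omega
            have h4 := (hstep k).2 (hK k hKk)
            rw [h4, ih hKk]
          · have hKeq : K = k + 1 := by omega
            rw [hP, hKeq]
      have hnoA : ∀ k, K ≤ k → ρ k ∉ Aset P := by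
        intro n hn hA
        have hA' : ρ n ∈ attrFull E V D (Tset P) := hA
        obtain ⟨n', hn'⟩ := (mem_attrFull_iff E).1 hA'
        have hplayV : PlayIn E V ρ := ⟨hinV, hplay.2⟩
        obtain ⟨m, hm1, hm2, -⟩ := attr_force E n' n ρ hn' hplayV (by
          intro m hm hint hattr hD
          rw [hconsm m hD]
          have hphm : (mem m).1 = P := hphconst m (by omega)
          have hnT : ρ m ∉ Tset P := by
            intro hc
            refine hK m (by omega) ?_
            show ρ m ∈ Tset (ph m)
            rw [show ph m = P from hphm]
            exact hc
          simp only [hmov]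
          rw [hphm, if_neg hnT, if_pos (show ρ m ∈ Aset P from hattr)])
        refine hK m (by omega) ?_
        show ρ m ∈ Tset (ph m)
        rw [show ph m = P from hphconst m (by omega)]
        exact hm2.1
      have hVVall : ∀ k, K ≤ k → ρ k ∈ VV P := fun k hk => ⟨hinV k, hnoA k hk⟩
      -- memory invariant: a recorded segment traces back to its entry point
      have hInv2 : ∀ k p e hh, mem k = (p, some (e, hh)) →
          ∃ t0, t0 < k ∧ mem t0 = (p, none) ∧ ρ t0 = e ∧
            hh = Arena.hist (fun m => ρ (t0 + m)) (k - t0) ∧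
            ∀ i, t0 ≤ i → i < k → ρ i ∈ VV p := by
        intro k
        induction k with
        | zero =>
          intro p e hh hc
          rw [hmem0] at hc
          have := congrArg (fun q : ℕ × Option (S × List S) => q.2) hc
          simp at this
        | succ k ih =>
          intro p e hh hc
          rw [hmemS] at hc
          by_cases h1 : ρ k ∈ Tset ((mem k).1)
          · exfalso
            simp only [hupd] at hc
            rw [if_pos h1] at hc
            have := congrArg (fun q : ℕ × Option (S × List S) => q.2) hc
            simp at this
          · by_cases h2 : ρ k ∈ Aset ((mem k).1)
            · exfalso
              simp only [hupd] at hc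
              rw [if_neg h1, if_pos h2] at hc
              have := congrArg (fun q : ℕ × Option (S × List S) => q.2) hc
              simp at this
            · simp only [hupd] at hc
              rw [if_neg h1, if_neg h2] at hc
              rcases hmk : (mem k).2 with - | ⟨e', hh'⟩ <;> rw [hmk] at hc
              · -- entry point is k itself
                have hp : (mem k).1 = p := congrArg (fun q : ℕ × Option (S × List S) => q.1) hc
                have he2 : ρ k = e ∧ [ρ k] = hh := by
                  have := congrArg (fun q : ℕ × Option (S × List S) => q.2) hc
                  simp only at this
                  injection this with h3
                  injection h3 with h4 h5
                  exact ⟨h4, h5⟩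
                refine ⟨k, by omega, ?_, he2.1, ?_, ?_⟩
                · rw [← hp, ← hmk]
                · rw [← he2.2]
                  have hkk : k + 1 - k = 1 := by omega
                  rw [hkk, hist_succ, hist_zero]
                  simp
                · intro i hi1 hi2
                  have : i = k := by omega
                  rw [this, ← hp]
                  exact ⟨hinV k, h2⟩
              · have hp : (mem k).1 = p := congrArg (fun q : ℕ × Option (S × List S) => q.1) hc
                have he2 : e' = e ∧ hh' ++ [ρ k] = hh := by
                  have := congrArg (fun q : ℕ × Option (S × List S) => q.2) hc
                  simp only at this
                  injection this with h3
                  injection h3 with h4 h5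
                  exact ⟨h4, h5⟩
                have hmemk : mem k = (p, some (e, hh')) := by
                  have hrfl : mem k = ((mem k).1, (mem k).2) := rfl
                  rw [hrfl, hmk, hp, he2.1]
                obtain ⟨t0, ht0, hmemt0, hρt0, hhist, hint⟩ := ih p e hh' hmemk
                refine ⟨t0, by omega, hmemt0, hρt0, ?_, ?_⟩
                · rw [← he2.2, hhist]
                  have h5 : k + 1 - t0 = (k - t0) + 1 := by omega
                  rw [h5, hist_succ]
                  have h6 : t0 + (k - t0) = k := by omega
                  show Arena.hist (fun m => ρ (t0 + m)) (k - t0) ++ [ρ k] =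
                    Arena.hist (fun m => ρ (t0 + m)) (k - t0) ++ [(fun m => ρ (t0 + m)) (k - t0)]
                  simp only []
                  rw [h6]
                · intro i hi1 hi2
                  rcases Nat.lt_or_ge i k with h | h
                  · exact hint i hi1 h
                  · have hik : i = k := by omega
                    rw [hik, ← hp]
                    exact ⟨hinV k, h2⟩
      -- the entry point of the final subgame segment
      have hKnT : ρ K ∉ Tset ((mem K).1) := fun hc => hK K le_rfl hc
      have hKnA : ρ K ∉ Aset ((mem K).1) := by
        rw [show (mem K).1 = P from hphconst K le_rfl]
        exact hnoA K le_rfl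
      obtain ⟨e, hh, hmemK1⟩ : ∃ e hh, mem (K + 1) = (P, some (e, hh)) := by
        rw [hmemS]
        simp only [hupd]
        rw [if_neg hKnT, if_neg hKnA]
        rcases hmk : (mem K).2 with - | ⟨e', hh'⟩
        · exact ⟨ρ K, [ρ K], by rw [show (mem K).1 = P from hphconst K le_rfl]⟩
        · exact ⟨e', hh' ++ [ρ K], by rw [show (mem K).1 = P from hphconst K le_rfl]⟩
      obtain ⟨t0, ht0K, hmemt0, hρt0, -, hint⟩ := hInv2 (K + 1) P e hh hmemK1
      set τ : ℕ → S := fun m => ρ (t0 + m) with hτ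
      have hτVV : ∀ m, τ m ∈ VV P := by
        intro m
        rcases Nat.lt_or_ge (t0 + m) (K + 1) with h | h
        · exact hint (t0 + m) (by omega) h
        · exact hVVall (t0 + m) (by omega)
      have hτ0 : τ 0 = e := by
        show ρ (t0 + 0) = e
        rw [Nat.add_zero]
        exact hρt0
      have heVV : e ∈ VV P := hτ0 ▸ hτVV 0
      have hρt0VV : ρ t0 ∈ VV P := by rw [hρt0]; exact heVV
      have hmemtail : ∀ m, 1 ≤ m → mem (t0 + m) = (P, some (e, Arena.hist τ m)) := by
        intro m hm
        induction m with
        | zero => omega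
        | succ m ih2 =>
          rcases Nat.eq_or_lt_of_le hm with heq1 | hl
          · rw [← heq1]
            rw [hmemS t0, hmemt0]
            simp only [hupd]
            rw [if_neg (fun hc => hρt0VV.2 (hTsetA P hc)), if_neg (fun hc => hρt0VV.2 hc)]
            have h1 : Arena.hist τ 1 = [ρ t0] := by
              rw [hist_succ, hist_zero]
              try simp only [List.nil_append]
              try rfl
            try rw [h1]
            try rw [← hρt0]
            try rfl
          · have hmm : 1 ≤ m := by omega
            have heq : t0 + (m + 1) = (t0 + m) + 1 := by omega
            rw [heq, hmemS, ih2 hmm]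
            simp only [hupd]
            have hx : ρ (t0 + m) ∈ VV P := hτVV m
            rw [if_neg (fun hc => hx.2 (hTsetA P hc)), if_neg (fun hc => hx.2 hc)]
            rw [show Arena.hist τ (m + 1) = Arena.hist τ m ++ [τ m] from hist_succ τ m]
            try rfl
      have hτplay : PlayIn E (VV P) τ := by
        refine ⟨fun m => hτVV m, fun m => ?_⟩
        have heq : t0 + (m + 1) = (t0 + m) + 1 := by omega
        show E (ρ (t0 + m)) (ρ (t0 + (m + 1)))
        rw [heq]
        exact hplay.2 _
      have hτcons : ConsOn D (winStrat E (VV P) D G e) τ := by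
        intro m hm
        have heq : τ (m + 1) = ρ ((t0 + m) + 1) := by simp only [hτ, ← Nat.add_assoc]
        rw [heq, hconsm (t0 + m) hm]
        have hx : ρ (t0 + m) ∈ VV P := hτVV m
        rcases Nat.eq_zero_or_pos m with h | h
        · subst h
          simp only [Nat.add_zero]
          rw [hmemt0]
          simp only [hmov]
          rw [if_neg (fun hc => hρt0VV.2 (hTsetA P hc)), if_neg (fun hc => hρt0VV.2 hc),
            if_pos hρt0VV.1]
          rw [hist_zero, ← hρt0]
          rfl
        · rw [hmemtail m h]
          simp only [hmov]
          rw [if_neg (fun hc => hx.2 (hTsetA P hc)), if_neg (fun hc => hx.2 hc),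
            if_pos hx.1]
      have hwin := hsub P e heVV
      have hres := winStrat_win E hwin τ hτ0 hτplay hτcons
      rwa [hτ, infOcc_shift] at hres

/-- Determinacy of Muller games on finite arenas (main induction). -/
theorem muller_det_aux [Fintype S] (hE : ∀ s, ∃ t, E s t) :
    ∀ N : ℕ, ∀ X : Finset S, X.card ≤ N → ∀ U : Set S, U ⊆ ↑X → Subarena E U →
    ∀ D : Set S, ∀ G : Set (Set S), ∀ s ∈ U, WinOn E U D G s ∨ WinOn E U Dᶜ Gᶜ s := by
  intro N
  induction N with
  | zero =>
    intro X hX U hUX hU D G s hs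
    have hX0 : X = ∅ := Finset.card_eq_zero.1 (le_antisymm hX (Nat.zero_le _))
    rw [hX0] at hUX
    exact absurd (hUX hs) (by simp)
  | succ N ih =>
    intro X hX U hUX hU D G s hs
    have core : ∀ D' : Set S, ∀ G' : Set (Set S), ↑X ∈ G' → ∀ s' ∈ U,
        WinOn E U D' G' s' ∨ WinOn E U D'ᶜ G'ᶜ s' := by
      intro D' G' hXG s' hs'
      classical
      set W1 : Set S := {x | x ∈ U ∧ WinOn E U D'ᶜ G'ᶜ x} with hW1
      set Astar : Set S := attrFull E U D'ᶜ W1 with hAstar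
      have hAstarWin : ∀ y ∈ Astar, WinOn E U D'ᶜ G'ᶜ y :=
        win_attr_ext E hE hU (fun e he => he.2)
      by_cases hsA : s' ∈ Astar
      · exact Or.inr (hAstarWin s' hsA)
      set V : Set S := U \ Astar with hV
      have hsV : s' ∈ V := ⟨hs', hsA⟩
      have hVU : V ⊆ U := Set.diff_subset
      have hVtrap : ∀ x ∈ V, x ∉ D' → ∀ t, E x t → t ∈ U → t ∈ V := by
        intro x hx hxD t het htU
        exact ⟨htU, attr_compl_D E hx.2 hx.1 hxD het⟩
      have hVsub : Subarena E V := by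
        intro x hx
        by_cases hxD : x ∈ D'
        · obtain ⟨t, het, htU, hta⟩ := attr_compl_nD E hx.2 hx.1
            (fun hc => hc hxD) (hU x hx.1)
          exact ⟨t, ⟨htU, hta⟩, het⟩
        · obtain ⟨t, htU, het⟩ := hU x hx.1
          exact ⟨t, hVtrap x hx hxD t het htU, het⟩
      set cand : Finset (Finset S) := X.powerset.filter (fun M => ↑M ∉ G' ∧
        ∀ M' ∈ X.powerset, ↑M' ∉ G' → M ⊆ M' → M' = M) with hcand
      set ms : List (Set S) := cand.toList.map (fun M : Finset S => {x : S | x ∈ M}) with hms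
      have hcover : ∀ T : Set S, T.Nonempty → T ⊆ V → T ∉ G' → ∃ M ∈ ms, T ⊆ M := by
        intro T hTne hTV hTG
        have hTX : T ⊆ ↑X := fun x hx => hUX (hVU (hTV hx))
        set Tf : Finset S := (Set.toFinite T).toFinset with hTf
        have hTfcoe : (↑Tf : Set S) = T := Set.Finite.coe_toFinset _
        set B : Finset (Finset S) := X.powerset.filter (fun M => Tf ⊆ M ∧ ↑M ∉ G') with hB
        have hTfB : Tf ∈ B := by
          simp only [hB, Finset.mem_filter, Finset.mem_powerset]
          refine ⟨?_, subset_rfl, by rw [hTfcoe]; exact hTG⟩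
          intro x hx
          have : x ∈ T := by rwa [← hTfcoe]
          exact_mod_cast hTX this
        obtain ⟨M, hMB, hMmax⟩ := B.exists_max_image Finset.card ⟨Tf, hTfB⟩
        simp only [hB, Finset.mem_filter, Finset.mem_powerset] at hMB
        refine ⟨↑M, ?_, ?_⟩
        · have hMcand : M ∈ cand := by
            simp only [hcand, Finset.mem_filter, Finset.mem_powerset]
            refine ⟨hMB.1, hMB.2.2, ?_⟩
            intro M' hM' hM'G hMM'
            have hM'B : M' ∈ B := by
              simp only [hB, Finset.mem_filter, Finset.mem_powerset]
              exact ⟨hM', hMB.2.1.trans hMM', hM'G⟩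
            exact (Finset.eq_of_subset_of_card_le hMM' (hMmax M' hM'B)).symm
          rw [hms]
          exact List.mem_map.2 ⟨M, Finset.mem_toList.2 hMcand, rfl⟩
        · intro x hx
          have hxTf : x ∈ Tf := by rw [← hTfcoe] at hx; exact_mod_cast hx
          exact hMB.2.1 hxTf
      have hsub : ∀ p : ℕ, ∀ e ∈ V \ attrFull E V D' (V \ ms.getD (p % ms.length) ∅),
          WinOn E (V \ attrFull E V D' (V \ ms.getD (p % ms.length) ∅)) D' G' e := by
        intro p e he
        by_cases hlen : ms.length = 0
        · exfalso
          apply he.2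
          apply target_subset_attrFull
          have hnil : ms = [] := List.length_eq_zero_iff.1 hlen
          refine ⟨?_, he.1⟩
          rw [hnil]
          exact ⟨he.1, by simp⟩
        · have hjlt : p % ms.length < ms.length := Nat.mod_lt _ (by omega)
          have hmem : ms.getD (p % ms.length) ∅ ∈ ms := by
            rw [List.getD_eq_getElem ms ∅ hjlt]
            exact List.getElem_mem hjlt
          rw [hms] at hmem
          obtain ⟨MF, hMFtl, hMFcoe⟩ := List.mem_map.1 hmem
          have hMFcand : MF ∈ cand := Finset.mem_toList.1 hMFtl
          simp only [hcand, Finset.mem_filter, Finset.mem_powerset] at hMFcand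
          have hMFX : MF ⊆ X := hMFcand.1
          have hMFG : {x : S | x ∈ MF} ∉ G' := hMFcand.2.1
          have hMFne : MF ≠ X := by
            intro hc
            apply hMFG
            have : {x : S | x ∈ MF} = (↑X : Set S) := by
              rw [hc]; ext x; simp
            rw [this]
            exact hXG
          have hMFcard : MF.card ≤ N := by
            have := Finset.card_lt_card (Finset.ssubset_iff_subset_ne.2 ⟨hMFX, hMFne⟩)
            omega
          set VVp : Set S := V \ attrFull E V D' (V \ ms.getD (p % ms.length) ∅) with hVVp
          have hVVpM : VVp ⊆ ↑MF := by
            intro x hx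
            by_contra hc
            apply hx.2
            apply target_subset_attrFull
            refine ⟨⟨hx.1, ?_⟩, hx.1⟩
            rw [← hMFcoe]
            intro hc2
            exact hc (by exact_mod_cast hc2)
          have hVVpsub : Subarena E VVp := by
            intro x hx
            by_cases hxD : x ∈ D'
            · obtain ⟨t, htV, het⟩ := hVsub x hx.1
              exact ⟨t, ⟨htV, attr_compl_D E hx.2 hx.1 hxD het⟩, het⟩
            · obtain ⟨t, het, htV, hta⟩ := attr_compl_nD E hx.2 hx.1 hxD
                (by obtain ⟨t, htV, het⟩ := hVsub x hx.1; exact ⟨t, htV, het⟩)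
              exact ⟨t, ⟨htV, hta⟩, het⟩
          rcases ih MF hMFcard VVp (hVVpM) hVVpsub D' G' e he with h | h
          · exact h
          · exfalso
            have hesc : WinOn E U D'ᶜ G'ᶜ e := by
              refine win_escape E hE hU (fun x hx => hVU hx.1) hAstarWin ?_ he h
              intro x hx hxQ t het htU
              have hxD : x ∈ D' := not_not.1 hxQ
              by_cases htV : t ∈ V
              · exact Or.inl ⟨htV, attr_compl_D E hx.2 hx.1 hxD het⟩
              · right
                by_contra hc
                exact htV ⟨htU, hc⟩
            have heU : e ∈ U := hVU he.1
            exact he.1.2 (target_subset_attrFull E U D'ᶜ W1 ⟨⟨heU, hesc⟩, heU⟩)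
      exact Or.inl (round_robin E hE U V D' G' hU hVU hVtrap hVsub ms hcover hsub s' hsV)
    by_cases hXG : ↑X ∈ G
    · exact core D G hXG s hs
    · have h2 := core Dᶜ Gᶜ hXG s hs
      rw [compl_compl, compl_compl] at h2
      exact h2.symm

/-! ### Outcomes of full strategy profiles -/

lemma outcome_pair {n : ℕ} (A : Arena n S) (σ : Fin n → List S → S → S) (s : S) :
    ∀ k, (A.step σ)^[k] ([], s) = (Arena.hist (A.outcome σ s) k, A.outcome σ s k) := by
  intro k
  induction k with
  | zero => rfl
  | succ k ih =>
    have h2 : A.outcome σ s (k + 1) =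
        σ (A.owner (A.outcome σ s k)) (Arena.hist (A.outcome σ s) k) (A.outcome σ s k) := by
      show ((A.step σ)^[k + 1] ([], s)).2 = _
      rw [Function.iterate_succ_apply', ih]
      rfl
    rw [Function.iterate_succ_apply', ih, hist_succ]
    show (_, _) = (_, _)
    rw [h2]

lemma outcome_succ {n : ℕ} (A : Arena n S) (σ : Fin n → List S → S → S) (s : S) (k : ℕ) :
    A.outcome σ s (k + 1) =
      σ (A.owner (A.outcome σ s k)) (Arena.hist (A.outcome σ s) k) (A.outcome σ s k) := by
  show ((A.step σ)^[k + 1] ([], s)).2 = _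
  rw [Function.iterate_succ_apply', outcome_pair]
  rfl

/-! ### Payoff lemmas -/

lemma payoff_eq_true_iff {n : ℕ} (Φ : Fin n → Set (ℕ → S)) (ρ : ℕ → S) (i : Fin n) :
    payoff Φ ρ i = true ↔ ρ ∈ Φ i := by
  simp only [payoff]
  exact decide_eq_true_iff

lemma payoff_eq_false_iff {n : ℕ} (Φ : Fin n → Set (ℕ → S)) (ρ : ℕ → S) (i : Fin n) :
    payoff Φ ρ i = false ↔ ρ ∉ Φ i := by
  simp only [payoff]
  exact decide_eq_false_iff_not

/-- Determinacy of Muller games on the full arena. -/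
theorem muller_determined [Fintype S] (hE : ∀ s, ∃ t, E s t) (D : Set S)
    (G : Set (Set S)) (s : S) :
    WinOn E Set.univ D G s ∨ WinOn E Set.univ Dᶜ Gᶜ s :=
  muller_det_aux E hE (Fintype.card S) Finset.univ le_rfl Set.univ (by simp)
    (fun s _ => (hE s).imp (fun t ht => ⟨trivial, ht⟩)) D G s trivial
end MullerDet

/-- Profitable deviation outside `A_v`: from any `s ∉ A_v` some player `i` has a strategy
that, against every strategy profile of the other players, yields a payoff profile that `i`
prefers to `v`. -/
theorem profitable_deviation_of_not_mem_Av {n : ℕ} {S : Type*} [Fintype S]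
    (A : Arena n S) (Φ : Fin n → Set (ℕ → S)) (hM : ∀ i, IsMuller (Φ i))
    (v : Fin n → Bool) (s : S) (hs : s ∉ A.Av Φ v) :
    ∃ i : Fin n, ∃ σ' : List S → S → S, A.IsStrategy σ' ∧
      ∀ σ : Fin n → List S → S → S, (∀ j, j ≠ i → A.IsStrategy (σ j)) →
        Pref i v (payoff Φ (A.outcome (Function.update σ i σ') s)) := by
  classical
  have hE := A.succ_exists
  choose F hF using hM
  have hmemF : ∀ (i : Fin n) (ρ : ℕ → S), ρ ∈ Φ i ↔ infOcc ρ ∈ F i := by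
    intro i ρ
    rw [hF i]
    exact Iff.rfl
  have hWmem : ∀ ρ : ℕ → S, ρ ∈ phiW Φ v ↔ ∀ j, v j = true → infOcc ρ ∈ F j := by
    intro ρ
    simp only [phiW, Set.mem_iInter, Set.mem_setOf_eq]
    constructor
    · intro h j hj; exact (hmemF j ρ).1 (h j hj)
    · intro h j hj; exact (hmemF j ρ).2 (h j hj)
  have hLmem : ∀ ρ : ℕ → S, ρ ∈ phiL Φ v ↔ ∃ j, v j = false ∧ infOcc ρ ∈ F j := by
    intro ρ
    simp only [phiL, Set.mem_iUnion, Set.mem_setOf_eq]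
    constructor
    · rintro ⟨j, hj, hρ⟩; exact ⟨j, hj, (hmemF j ρ).1 hρ⟩
    · rintro ⟨j, hj, hρ⟩; exact ⟨j, hj, (hmemF j ρ).2 hρ⟩
  simp only [Arena.Av, Set.mem_inter_iff, not_and_or] at hs
  rcases hs with hs | hs
  · -- some winner w can deviate
    simp only [Set.mem_iInter, Set.mem_setOf_eq, not_forall] at hs
    obtain ⟨w, hw, hnw⟩ := hs
    set Gpsi : Set (Set S) := {T | (∀ j, v j = true → T ∈ F j) ∨
      (∃ j, v j = false ∧ T ∈ F j) ∨ T ∉ F w} with hGpsi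
    have hpsi : ∀ ρ : ℕ → S, ρ ∈ phiW Φ v ∪ phiL Φ v ∪ (Φ w)ᶜ ↔ infOcc ρ ∈ Gpsi := by
      intro ρ
      simp only [Set.mem_union, Set.mem_compl_iff, hGpsi, Set.mem_setOf_eq,
        hWmem ρ, hLmem ρ, hmemF w ρ]
      exact or_assoc
    set D : Set S := {t : S | A.owner t = w} with hD
    rcases muller_determined A.E hE D Gpsiᶜ s with hwin | hwin
    · -- player w can force the complement: profitable deviation
      obtain ⟨f, hfval, hfwin⟩ := hwin
      refine ⟨w, f, fun h t => (hfval h t).1, ?_⟩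
      intro σ hσ
      set ρ := A.outcome (Function.update σ w f) s with hρdef
      have hρ0 : ρ 0 = s := rfl
      have hstep : ∀ k, ρ (k + 1) =
          Function.update σ w f (A.owner (ρ k)) (Arena.hist ρ k) (ρ k) :=
        fun k => outcome_succ A _ s k
      have hplay : PlayIn A.E Set.univ ρ := by
        refine ⟨fun _ => trivial, fun k => ?_⟩
        rw [hstep k]
        by_cases ho : A.owner (ρ k) = w
        · rw [ho, Function.update_self]
          exact (hfval _ _).1
        · rw [Function.update_of_ne ho]
          exact hσ _ ho _ _
      have hcons : ConsOn D f ρ := by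
        intro k hk
        rw [hstep k, (show A.owner (ρ k) = w from hk), Function.update_self]
      have hnotpsi : infOcc ρ ∈ Gpsiᶜ := hfwin ρ hρ0 hplay hcons
      have h1 : ¬ ((∀ j, v j = true → infOcc ρ ∈ F j) ∨
          (∃ j, v j = false ∧ infOcc ρ ∈ F j) ∨ infOcc ρ ∉ F w) := hnotpsi
      push_neg at h1
      obtain ⟨h2, h3, h4⟩ := h1
      refine Or.inr ⟨?_, ?_, ?_⟩
      · have : payoff Φ ρ w = true := (payoff_eq_true_iff Φ ρ w).2 ((hmemF w ρ).2 h4)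
        rw [this, hw]
      · intro j
        by_cases hvj : v j = true
        · rw [hvj]; exact Bool.le_true _
        · have hvj' : v j = false := by
            cases hvb : v j
            · rfl
            · exact absurd hvb hvj
          have hpj : payoff Φ ρ j = false :=
            (payoff_eq_false_iff Φ ρ j).2 (fun hc => h3 j hvj' ((hmemF j ρ).1 hc))
          rw [hpj, hvj']
      · obtain ⟨j, hj1, hj2⟩ := h2
        refine ⟨j, ?_⟩
        have hpj : payoff Φ ρ j = false :=
          (payoff_eq_false_iff Φ ρ j).2 (fun hc => hj2 ((hmemF j ρ).1 hc))
        rw [hpj, hj1]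
        decide
    · -- otherwise the coalition could retaliate, contradicting `s ∉ A_v`
      exfalso
      apply hnw
      obtain ⟨f, hfval, hfwin⟩ := hwin
      refine ⟨fun _ => f, fun j _ => fun h t => (hfval h t).1, ?_⟩
      intro ρ hρ
      obtain ⟨hρ0, hρplay, hρcons⟩ := hρ
      have hcons : ConsOn Dᶜ f ρ := by
        intro k hk
        exact hρcons (A.owner (ρ k)) hk k rfl
      have hincc : infOcc ρ ∈ Gpsiᶜᶜ := hfwin ρ hρ0 ⟨fun _ => trivial, hρplay⟩ hcons
      rw [compl_compl] at hincc
      exact (hpsi ρ).2 hincc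
  · -- some loser l can deviate
    simp only [Set.mem_iInter, Set.mem_setOf_eq, not_forall] at hs
    obtain ⟨l, hl, hnl⟩ := hs
    set Gpsi : Set (Set S) := {T | ((∀ j, v j = true → T ∈ F j) ∨
      (∃ j, v j = false ∧ T ∈ F j)) ∧ T ∉ F l} with hGpsi
    have hpsi : ∀ ρ : ℕ → S, ρ ∈ (phiW Φ v ∪ phiL Φ v) ∩ (Φ l)ᶜ ↔ infOcc ρ ∈ Gpsi := by
      intro ρ
      simp only [Set.mem_inter_iff, Set.mem_union, Set.mem_compl_iff, hGpsi,
        Set.mem_setOf_eq, hWmem ρ, hLmem ρ, hmemF l ρ]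
    set D : Set S := {t : S | A.owner t = l} with hD
    rcases muller_determined A.E hE D Gpsiᶜ s with hwin | hwin
    · obtain ⟨f, hfval, hfwin⟩ := hwin
      refine ⟨l, f, fun h t => (hfval h t).1, ?_⟩
      intro σ hσ
      set ρ := A.outcome (Function.update σ l f) s with hρdef
      have hρ0 : ρ 0 = s := rfl
      have hstep : ∀ k, ρ (k + 1) =
          Function.update σ l f (A.owner (ρ k)) (Arena.hist ρ k) (ρ k) :=
        fun k => outcome_succ A _ s k
      have hplay : PlayIn A.E Set.univ ρ := by
        refine ⟨fun _ => trivial, fun k => ?_⟩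
        rw [hstep k]
        by_cases ho : A.owner (ρ k) = l
        · rw [ho, Function.update_self]
          exact (hfval _ _).1
        · rw [Function.update_of_ne ho]
          exact hσ _ ho _ _
      have hcons : ConsOn D f ρ := by
        intro k hk
        rw [hstep k, (show A.owner (ρ k) = l from hk), Function.update_self]
      have hnotpsi : infOcc ρ ∈ Gpsiᶜ := hfwin ρ hρ0 hplay hcons
      have h1 : ¬ (((∀ j, v j = true → infOcc ρ ∈ F j) ∨
          (∃ j, v j = false ∧ infOcc ρ ∈ F j)) ∧ infOcc ρ ∉ F l) := hnotpsi
      by_cases hFl : infOcc ρ ∈ F l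
      · -- player l now wins her own objective
        refine Or.inl ?_
        have : payoff Φ ρ l = true := (payoff_eq_true_iff Φ ρ l).2 ((hmemF l ρ).2 hFl)
        rw [this, hl]
        decide
      · have h2 : ¬ ((∀ j, v j = true → infOcc ρ ∈ F j) ∨
            (∃ j, v j = false ∧ infOcc ρ ∈ F j)) := by
          intro hc
          exact h1 ⟨hc, hFl⟩
        push_neg at h2
        obtain ⟨h3, h4⟩ := h2
        refine Or.inr ⟨?_, ?_, ?_⟩
        · have : payoff Φ ρ l = false := (payoff_eq_false_iff Φ ρ l).2
            (fun hc => hFl ((hmemF l ρ).1 hc))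
          rw [this, hl]
        · intro j
          by_cases hvj : v j = true
          · rw [hvj]; exact Bool.le_true _
          · have hvj' : v j = false := by
              cases hvb : v j
              · rfl
              · exact absurd hvb hvj
            have hpj : payoff Φ ρ j = false :=
              (payoff_eq_false_iff Φ ρ j).2 (fun hc => h4 j hvj' ((hmemF j ρ).1 hc))
            rw [hpj, hvj']
        · obtain ⟨j, hj1, hj2⟩ := h3
          refine ⟨j, ?_⟩
          have hpj : payoff Φ ρ j = false :=
            (payoff_eq_false_iff Φ ρ j).2 (fun hc => hj2 ((hmemF j ρ).1 hc))
          rw [hpj, hj1]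
          decide
    · exfalso
      apply hnl
      obtain ⟨f, hfval, hfwin⟩ := hwin
      refine ⟨fun _ => f, fun j _ => fun h t => (hfval h t).1, ?_⟩
      intro ρ hρ
      obtain ⟨hρ0, hρplay, hρcons⟩ := hρ
      have hcons : ConsOn Dᶜ f ρ := by
        intro k hk
        exact hρcons (A.owner (ρ k)) hk k rfl
      have hincc : infOcc ρ ∈ Gpsiᶜᶜ := hfwin ρ hρ0 ⟨fun _ => trivial, hρplay⟩ hcons
      rw [compl_compl] at hincc
      exact (hpsi ρ).2 hincc
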